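/- The language { aⁿbⁿ | n ≥ 1 } is generated by some 1-D cellular automaton of radius 1 over alphabet {a, b, ⊥} from a regular set of initial configurations (namely the single word ab, padded by ⊥), even though this language is not regular. -/

import Mathlib

/-- Global map of a 1-D cellular automaton of radius `r` with local rule `f`. -/
def glob {α : Type*} (r : ℕ) (f : (Fin (2 * r + 1) → α) → α) (c : ℤ → α) : ℤ → α :=
  fun z => f (fun j => c (z + (j.val : ℤ) - (r : ℤ)))

/-- The finite configuration `⊥^ω w ⊥^ω`, with `w` placed at positions `0, …, |w| - 1`. -/
def padW {α : Type*} (bot : α) (w : List α) : ℤ → α :=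
  fun z => if 0 ≤ z ∧ z < (w.length : ℤ) then w.getD z.toNat bot else bot

/-- The alphabet `{a, b, ⊥}`. -/
inductive AB : Type
  | a : AB
  | b : AB
  | bot : AB
deriving DecidableEq

instance instFintypeAB : Fintype AB :=
  ⟨{AB.a, AB.b, AB.bot}, fun x => by cases x <;> simp⟩

/-- The local rule of the CA. -/
def CArule : AB → AB → AB → AB
  | _, AB.a, _ => AB.a
  | _, AB.b, _ => AB.b
  | l, AB.bot, r => if r = AB.a then AB.a else if l = AB.b then AB.b else AB.bot

def CAf : (Fin (2 * 1 + 1) → AB) → AB := fun g => CArule (g 0) (g 1) (g 2)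

/-- Configuration after `n` steps: `a` on `[-n, 0]`, `b` on `[1, n+1]`. -/
def conf (n : ℕ) : ℤ → AB := fun z =>
  if -(n : ℤ) ≤ z ∧ z ≤ 0 then AB.a
  else if 1 ≤ z ∧ z ≤ (n : ℤ) + 1 then AB.b
  else AB.bot

lemma conf_a {n : ℕ} {z : ℤ} (h1 : -(n : ℤ) ≤ z) (h2 : z ≤ 0) : conf n z = AB.a := by
  unfold conf; rw [if_pos ⟨h1, h2⟩]

lemma conf_b {n : ℕ} {z : ℤ} (h1 : 1 ≤ z) (h2 : z ≤ (n : ℤ) + 1) : conf n z = AB.b := by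
  unfold conf; rw [if_neg (by omega), if_pos ⟨h1, h2⟩]

lemma conf_bot {n : ℕ} {z : ℤ} (h : z < -(n : ℤ) ∨ (n : ℤ) + 1 < z) : conf n z = AB.bot := by
  unfold conf; rw [if_neg (by omega), if_neg (by omega)]

def wrd (n : ℕ) : List AB := List.replicate (n + 1) AB.a ++ List.replicate (n + 1) AB.b

lemma conf_eq_padW (n : ℕ) (z : ℤ) : conf n z = padW AB.bot (wrd n) (z + n) := by
  unfold conf padW wrd
  simp only [List.length_append, List.length_replicate]
  by_cases h1 : -(n : ℤ) ≤ z ∧ z ≤ 0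
  · rw [if_pos h1, if_pos (by push_cast; omega)]
    have hlt : (z + n).toNat < n + 1 := by omega
    rw [List.getD_append _ _ _ _ (by simpa using hlt),
      List.getD_eq_getElem _ _ (by simpa using hlt), List.getElem_replicate]
  · by_cases h2 : 1 ≤ z ∧ z ≤ (n : ℤ) + 1
    · rw [if_neg h1, if_pos h2, if_pos (by push_cast; omega)]
      have hge : n + 1 ≤ (z + n).toNat := by omega
      have hlt : (z + n).toNat < 2 * (n + 1) := by omega
      rw [List.getD_eq_getElem _ _ (by simp; omega)]
      rw [List.getElem_append_right (by simpa using hge)]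
      simp [List.getElem_replicate]
    · rw [if_neg h1, if_neg h2, if_neg (by push_cast; omega)]

lemma glob_conf (n : ℕ) : glob 1 CAf (conf n) = conf (n + 1) := by
  funext z
  have e1 : z + (0 : ℤ) - 1 = z - 1 := by ring
  have e2 : z + (1 : ℤ) - 1 = z := by ring
  have e3 : z + (2 : ℤ) - 1 = z + 1 := by ring
  have e : glob 1 CAf (conf n) z = CArule (conf n (z - 1)) (conf n z) (conf n (z + 1)) := by
    show CArule (conf n (z + 0 - 1)) (conf n (z + 1 - 1)) (conf n (z + 2 - 1)) = _
    rw [e1, e2, e3]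
  rw [e]
  rcases lt_trichotomy z (-(n : ℤ) - 1) with h | h | h
  · rw [conf_bot (by omega), conf_bot (n := n) (z := z) (by omega),
      conf_bot (n := n) (z := z + 1) (by omega), conf_bot (n := n + 1) (by push_cast; omega)]
    rfl
  · rw [conf_bot (n := n) (z := z - 1) (by omega), conf_bot (n := n) (z := z) (by omega),
      conf_a (n := n) (z := z + 1) (by omega) (by omega),
      conf_a (n := n + 1) (z := z) (by push_cast; omega) (by omega)]
    rfl
  · by_cases hm : -(n : ℤ) ≤ z ∧ z ≤ 0
    · rw [conf_a (n := n) (z := z) hm.1 hm.2,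
        conf_a (n := n + 1) (z := z) (by push_cast; omega) hm.2]
      rfl
    · by_cases hb : 1 ≤ z ∧ z ≤ (n : ℤ) + 1
      · rw [conf_b (n := n) (z := z) hb.1 hb.2,
          conf_b (n := n + 1) (z := z) hb.1 (by push_cast; omega)]
        rfl
      · rcases eq_or_lt_of_le (show (n : ℤ) + 2 ≤ z by omega) with he | hgt
        · rw [conf_b (n := n) (z := z - 1) (by omega) (by omega),
            conf_bot (n := n) (z := z) (by omega), conf_bot (n := n) (z := z + 1) (by omega),
            conf_b (n := n + 1) (z := z) (by omega) (by push_cast; omega)]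
          rfl
        · rw [conf_bot (n := n) (z := z - 1) (by omega), conf_bot (n := n) (z := z) (by omega),
            conf_bot (n := n) (z := z + 1) (by omega),
            conf_bot (n := n + 1) (z := z) (by push_cast; omega)]
          rfl

lemma iter_conf (n : ℕ) : (glob 1 CAf)^[n] (padW AB.bot [AB.a, AB.b]) = conf n := by
  induction n with
  | zero =>
    funext z
    simp only [Function.iterate_zero, id]
    rw [conf_eq_padW 0 z]
    norm_num [wrd]
  | succ k ih => rw [Function.iterate_succ_apply', ih, glob_conf]

lemma bot_not_mem_wrd (n : ℕ) : AB.bot ∉ wrd n := by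
  unfold wrd
  simp [List.mem_replicate]

lemma padW_ne_bot {w : List AB} (hw : AB.bot ∉ w) (z : ℤ) :
    padW AB.bot w z ≠ AB.bot ↔ 0 ≤ z ∧ z < (w.length : ℤ) := by
  unfold padW
  by_cases h : 0 ≤ z ∧ z < (w.length : ℤ)
  · rw [if_pos h]
    have hlt : z.toNat < w.length := by omega
    rw [List.getD_eq_getElem _ _ hlt]
    exact ⟨fun _ => h, fun _ hc => hw (hc ▸ List.getElem_mem hlt)⟩
  · rw [if_neg h]; simp [h]

lemma pad_inj {w u : List AB} (hw : AB.bot ∉ w) (hu : AB.bot ∉ u) (hune : u ≠ [])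
    (d : ℤ) (h : ∀ z : ℤ, padW AB.bot w z = padW AB.bot u (z + d)) : w = u := by
  have hulen : 0 < (u.length : ℤ) := by
    have := List.length_pos_iff.mpr hune; exact_mod_cast this
  have hsupp : ∀ z : ℤ, (0 ≤ z ∧ z < (w.length : ℤ)) ↔ (0 ≤ z + d ∧ z + d < (u.length : ℤ)) := by
    intro z
    rw [← padW_ne_bot hw z, ← padW_ne_bot hu (z + d), h z]
  have hd : d = 0 := by
    have h1 := (hsupp (-d)).mpr (by omega)
    have h2 := (hsupp 0).mp (by omega)
    omega
  subst hd
  have hlen : w.length = u.length := by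
    have h1 := hsupp (w.length : ℤ)
    have h2 := hsupp (u.length : ℤ)
    have h3 := hsupp 0
    simp only [add_zero] at h1 h2 h3
    omega
  apply List.ext_getElem hlen
  intro i hi1 hi2
  have hh := h (i : ℤ)
  unfold padW at hh
  rw [if_pos (by exact ⟨by positivity, by exact_mod_cast hi1⟩), add_zero,
    if_pos (by exact ⟨by positivity, by exact_mod_cast hi2⟩)] at hh
  simp only [Int.toNat_natCast] at hh
  rw [List.getD_eq_getElem _ _ hi1, List.getD_eq_getElem _ _ hi2] at hh
  exact hh


/-- The language `{aⁿbⁿ | n ≥ 1}` is generated by some radius-1 CA over `{a, b, ⊥}`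
from the initial configuration `⊥^ω a b ⊥^ω` (with `a` at position 0 and `b` at position 1),
even though this language is not regular (no DFA with finitely many states recognizes it). -/
theorem stmt7 :
    (∃ f : (Fin (2 * 1 + 1) → AB) → AB,
      f (fun _ => AB.bot) = AB.bot ∧
      { w : List AB | AB.bot ∉ w ∧
          ∃ (n : ℕ) (s : ℤ), ∀ z : ℤ,
            (glob 1 f)^[n] (padW AB.bot [AB.a, AB.b]) z = padW AB.bot w (z - s) }
        = { w : List AB | ∃ n : ℕ, 1 ≤ n ∧
            w = List.replicate n AB.a ++ List.replicate n AB.b }) ∧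
    ¬ ∃ (Q : Type) (_ : Finite Q) (M : DFA AB Q),
        ∀ w : List AB, w ∈ M.accepts ↔
          ∃ n : ℕ, 1 ≤ n ∧ w = List.replicate n AB.a ++ List.replicate n AB.b := by
  constructor
  · refine ⟨CAf, rfl, ?_⟩
    ext w
    simp only [Set.mem_setOf_eq]
    constructor
    · rintro ⟨hbot, n, s, h⟩
      have hw : w = wrd n := by
        apply pad_inj hbot (bot_not_mem_wrd n) (by unfold wrd; simp) (s + n)
        intro z
        have hz := h (z + s)
        rw [iter_conf, conf_eq_padW] at hz
        have ez : z + s - s = z := by ring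
        rw [ez] at hz
        rw [← hz]
        congr 1
        ring
      exact ⟨n + 1, by omega, by rw [hw]; rfl⟩
    · rintro ⟨n, hn, rfl⟩
      refine ⟨by simp [List.mem_replicate], n - 1, -((n : ℤ) - 1), fun z => ?_⟩
      rw [iter_conf, conf_eq_padW]
      have hn' : (n - 1) + 1 = n := by omega
      have hwrd : wrd (n - 1) = List.replicate n AB.a ++ List.replicate n AB.b := by
        unfold wrd; rw [hn']
      rw [hwrd]
      congr 1
      have hc : ((n - 1 : ℕ) : ℤ) = (n : ℤ) - 1 := by omega
      rw [hc]; ring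
  · rintro ⟨Q, hQ, M, hM⟩
    obtain ⟨m, n, hmn, heq⟩ :=
      Finite.exists_ne_map_eq_of_infinite
        (fun k : ℕ => M.evalFrom M.start (List.replicate (k + 1) AB.a))
    have hacc : List.replicate (n + 1) AB.a ++ List.replicate (n + 1) AB.b ∈ M.accepts :=
      (hM _).mpr ⟨n + 1, by omega, rfl⟩
    have hacc' : List.replicate (m + 1) AB.a ++ List.replicate (n + 1) AB.b ∈ M.accepts := by
      rw [DFA.mem_accepts] at hacc ⊢
      rwa [DFA.eval, DFA.evalFrom_of_append, heq, ← DFA.evalFrom_of_append]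
    obtain ⟨k, hk, hkeq⟩ := (hM _).mp hacc'
    have h1 : m + 1 = k := by
      have := congrArg (List.count AB.a) hkeq
      simpa [List.count_append, List.count_replicate] using this
    have h2 : n + 1 = k := by
      have := congrArg (List.count AB.b) hkeq
      simpa [List.count_append, List.count_replicate] using this
    exact hmn (by omega)
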